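/- Let R = ℤ[t]/(t⁴ − t³ + t² − t + 1) with τ the image of t. If k₁, k₂ ∈ ℕ, i ∈ ℕ, and ε ∈ {1, −1} satisfy (1 + τ)^{k₁}·(1 − τ)^{k₂} = ε·τⁱ in R, then k₁ = 0 and k₂ = 0. -/

import Mathlib

open Polynomial in
theorem stmt_9 (I : Ideal (Polynomial ℤ))
    (hI : I = Ideal.span ({X ^ 4 - X ^ 3 + X ^ 2 - X + 1} : Set (Polynomial ℤ)))
    (τ : Polynomial ℤ ⧸ I) (hτ : τ = Ideal.Quotient.mk I X)
    (k₁ k₂ i : ℕ) (ε : Polynomial ℤ ⧸ I) (hε : ε = 1 ∨ ε = -1)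
    (h : (1 + τ) ^ k₁ * (1 - τ) ^ k₂ = ε * τ ^ i) :
    k₁ = 0 ∧ k₂ = 0 := by
  set θ : ℝ := 3 * Real.pi / 5 with hθ
  set ζ : ℂ := Complex.exp ((θ : ℂ) * Complex.I) with hζdef
  -- ζ^5 = -1
  have hζ5 : ζ ^ 5 = -1 := by
    rw [hζdef, ← Complex.exp_nat_mul]
    have h1 : ((5 : ℕ) : ℂ) * ((θ : ℂ) * Complex.I) = ((3 : ℕ) : ℂ) * ((Real.pi : ℂ) * Complex.I) := by
      rw [hθ]; push_cast; ring
    rw [h1, Complex.exp_nat_mul, Complex.exp_pi_mul_I]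
    norm_num
  have him : ζ.im = Real.sin θ := by
    rw [hζdef, Complex.exp_ofReal_mul_I_im]
  have hre : ζ.re = Real.cos θ := by
    rw [hζdef, Complex.exp_ofReal_mul_I_re]
  have hθpos : 0 < θ := by rw [hθ]; positivity
  have hθlt : θ < Real.pi := by rw [hθ]; nlinarith [Real.pi_pos]
  have hsin : 0 < Real.sin θ := Real.sin_pos_of_pos_of_lt_pi hθpos hθlt
  have hne : ζ + 1 ≠ 0 := by
    intro hc
    have : ζ.im = 0 := by
      have := congrArg Complex.im hc
      simpa using this
    rw [him] at this; linarith
  have hroot : ζ ^ 4 - ζ ^ 3 + ζ ^ 2 - ζ + 1 = 0 := by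
    have key : (ζ + 1) * (ζ ^ 4 - ζ ^ 3 + ζ ^ 2 - ζ + 1) = 0 := by
      linear_combination hζ5
    rcases mul_eq_zero.mp key with h' | h'
    · exact absurd h' hne
    · exact h'
  -- the ring hom
  have hcond : ∀ a ∈ I, (Polynomial.aeval ζ).toRingHom a = 0 := by
    intro a ha
    rw [hI, Ideal.mem_span_singleton] at ha
    obtain ⟨c, rfl⟩ := ha
    simp only [map_mul]
    have : (Polynomial.aeval ζ) (X ^ 4 - X ^ 3 + X ^ 2 - X + 1 : Polynomial ℤ) = 0 := by
      simp [hroot]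
    simp only [AlgHom.toRingHom_eq_coe, RingHom.coe_coe] at *
    rw [this, zero_mul]
  let φ : (Polynomial ℤ ⧸ I) →+* ℂ := Ideal.Quotient.lift I (Polynomial.aeval ζ).toRingHom hcond
  have hφτ : φ τ = ζ := by
    rw [hτ]
    simp [φ, Ideal.Quotient.lift_mk]
  -- apply abs
  have habs : (‖1 + ζ‖) ^ k₁ * (‖1 - ζ‖) ^ k₂ = 1 := by
    have := congrArg (fun z => ‖φ z‖) h
    simp only [map_mul, map_pow, norm_mul, norm_pow, map_one, map_sub, map_add, hφτ] at this
    have hεabs : ‖φ ε‖ = 1 := by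
      rcases hε with rfl | rfl <;> simp
    have hζabs : ‖ζ‖ = 1 := by
      rw [hζdef]; exact Complex.norm_exp_ofReal_mul_I θ
    rw [hεabs, hζabs, one_pow, mul_one] at this
    simpa using this
  -- cos θ bounds
  have hcosub : Real.cos θ < 0 := by
    apply Real.cos_neg_of_pi_div_two_lt_of_lt
    · rw [hθ]; nlinarith [Real.pi_pos]
    · linarith [Real.pi_pos]
  have hcoslb : -1/2 < Real.cos θ := by
    have : Real.cos (2 * Real.pi / 3) < Real.cos θ := by
      apply Real.cos_lt_cos_of_nonneg_of_le_pi (le_of_lt hθpos)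
        (by nlinarith [Real.pi_pos]) (by rw [hθ]; nlinarith [Real.pi_pos])
    rw [show (2 * Real.pi / 3 : ℝ) = Real.pi - Real.pi / 3 by ring, Real.cos_pi_sub, Real.cos_pi_div_three] at this
    linarith
  have hpyth : Real.sin θ ^ 2 + Real.cos θ ^ 2 = 1 := Real.sin_sq_add_cos_sq θ
  have hA2 : ‖1 + ζ‖ ^ 2 = 2 + 2 * Real.cos θ := by
    rw [Complex.sq_norm, Complex.normSq_apply]
    simp [hre, him]
    nlinarith [hpyth]
  have hB2 : ‖1 - ζ‖ ^ 2 = 2 - 2 * Real.cos θ := by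
    rw [Complex.sq_norm, Complex.normSq_apply]
    simp [hre, him]
    nlinarith [hpyth]
  have hA : 1 < ‖1 + ζ‖ := by
    nlinarith [norm_nonneg (1 + ζ), hA2, hcoslb]
  have hB : 1 < ‖1 - ζ‖ := by
    nlinarith [norm_nonneg (1 - ζ), hB2, hcosub]
  obtain ⟨A, hAe⟩ : ∃ A : ℝ, A = ‖1 + ζ‖ := ⟨_, rfl⟩
  obtain ⟨B, hBe⟩ : ∃ B : ℝ, B = ‖1 - ζ‖ := ⟨_, rfl⟩
  rw [← hAe] at habs hA
  rw [← hBe] at habs hB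
  clear hAe hBe hA2 hB2 h hroot hζ5
  constructor
  · by_contra hk
    have h1 : 1 < A ^ k₁ := one_lt_pow₀ hA hk
    have h2 : 1 ≤ B ^ k₂ := one_le_pow₀ (le_of_lt hB)
    nlinarith
  · by_contra hk
    have h1 : 1 < B ^ k₂ := one_lt_pow₀ hB hk
    have h2 : 1 ≤ A ^ k₁ := one_le_pow₀ (le_of_lt hA)
    nlinarith
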